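/- Let R be a commutative Noetherian ring and C a finitely generated R-module with Ext^1_R(C,C) = 0. Then a finitely generated R-module M is 1-C-torsionfree if and only if there exists a short exact sequence 0 → M → C₀ → N → 0 of finitely generated R-modules such that C₀ is a direct summand of a finite direct sum of copies of C and Ext^1_R(N, C) = 0. -/

import Mathlib

open CategoryTheory

noncomputable def ExtVanishes (A : Type) [CommRing A] (i : ℕ)
    (M : Type) [AddCommGroup M] [Module A M]
    (N : Type) [AddCommGroup N] [Module A N] : Prop :=
  Subsingleton ((((Ext A (ModuleCat.{0} A) i).obj (Opposite.op (ModuleCat.of A M))).obj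
    (ModuleCat.of A N)))

noncomputable def ExtMod (A : Type) [CommRing A] (i : ℕ)
    (M : Type) [AddCommGroup M] [Module A M]
    (N : Type) [AddCommGroup N] [Module A N] : ModuleCat.{0} A :=
  ((Ext A (ModuleCat.{0} A) i).obj (Opposite.op (ModuleCat.of A M))).obj (ModuleCat.of A N)

noncomputable def evalMap (A : Type) [CommRing A]
    (C : Type) [AddCommGroup C] [Module A C]
    (M : Type) [AddCommGroup M] [Module A M] :
    M →ₗ[A] ((M →ₗ[A] C) →ₗ[A] C) :=
  LinearMap.applyₗ

/-- `M` is `n`-`C`-torsionfree. (`n = 0` imposes no condition.) -/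
noncomputable def IsCTorsionfree (A : Type) [CommRing A]
    (C : Type) [AddCommGroup C] [Module A C]
    (M : Type) [AddCommGroup M] [Module A M] : ℕ → Prop
  | 0 => True
  | 1 => Function.Injective (evalMap A C M)
  | (m + 2) => Function.Bijective (evalMap A C M) ∧
      ∀ i : ℕ, 1 ≤ i → i ≤ m → ExtVanishes A i (M →ₗ[A] C) C

/-- `C` is an `n`-semidualizing `A`-module. -/
noncomputable def IsSemidualizing (A : Type) [CommRing A]
    (C : Type) [AddCommGroup C] [Module A C] : ℕ → Prop
  | 0 => True
  | 1 => Function.Injective (LinearMap.lsmul A C) ∧ ExtVanishes A 1 C C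
  | (m + 2) => Function.Bijective (LinearMap.lsmul A C) ∧
      ∀ i : ℕ, 1 ≤ i → i ≤ m + 2 → ExtVanishes A i C C

/-- `M` is `n`-`C`-spherical: `Ext^i(M,C) = 0` for `1 ≤ i ≤ n`. -/
noncomputable def IsCSpherical (A : Type) [CommRing A]
    (C : Type) [AddCommGroup C] [Module A C]
    (M : Type) [AddCommGroup M] [Module A M] (n : ℕ) : Prop :=
  ∀ i : ℕ, 1 ≤ i → i ≤ n → ExtVanishes A i M C

/-- `X` belongs to `add C`: it is a direct summand of a finite direct sum of copies of `C`. -/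
def MemAddC (A : Type) [CommRing A]
    (C : Type) [AddCommGroup C] [Module A C]
    (X : Type) [AddCommGroup X] [Module A X] : Prop :=
  ∃ (k : ℕ) (f : X →ₗ[A] (Fin k → C)) (g : (Fin k → C) →ₗ[A] X),
    g.comp f = LinearMap.id

/-- There is an exact sequence `0 → D_m → ⋯ → D_0 → M → 0` with all `D_i ∈ add C`. -/
noncomputable def HasCResolution (A : Type) [CommRing A]
    (C : Type) [AddCommGroup C] [Module A C]
    (M : Type) [AddCommGroup M] [Module A M] (m : ℕ) : Prop :=
  ∃ (D : ℕ → ModuleCat.{0} A) (d : ∀ i : ℕ, (D (i + 1)) →ₗ[A] (D i)) (ε : (D 0) →ₗ[A] M),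
    (∀ i : ℕ, i ≤ m → MemAddC A C (D i)) ∧
    (∀ i : ℕ, m < i → Subsingleton (D i)) ∧
    Function.Surjective ε ∧ Function.Exact (d 0) ε ∧
    (∀ i : ℕ, Function.Exact (d (i + 1)) (d i))

/-- `Cdim_A M`, the `add C`-resolution dimension of `M`, as an extended natural number. -/
noncomputable def cdim (A : Type) [CommRing A]
    (C : Type) [AddCommGroup C] [Module A C]
    (M : Type) [AddCommGroup M] [Module A M] : ℕ∞ :=
  sInf ((fun m : ℕ => (m : ℕ∞)) '' {m : ℕ | HasCResolution A C M m})

/-- `K` is a first syzygy of `M`: there is a short exact sequence `0 → K → P → M → 0`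
with `P` finitely generated projective. -/
def IsFirstSyzygy (A : Type) [CommRing A] (K M : ModuleCat.{0} A) : Prop :=
  ∃ (P : ModuleCat.{0} A) (ι : K →ₗ[A] P) (ε : P →ₗ[A] M),
    Module.Finite A P ∧ Module.Projective A P ∧
    Function.Injective ι ∧ Function.Exact ι ε ∧ Function.Surjective ε

/-- `K` is an `n`-th syzygy of `M`. -/
def IsNthSyzygy (A : Type) [CommRing A] : ℕ → ModuleCat.{0} A → ModuleCat.{0} A → Prop
  | 0, K, M => Nonempty (K ≃ₗ[A] M)
  | (n + 1), K, M => ∃ L : ModuleCat.{0} A, IsFirstSyzygy A K L ∧ IsNthSyzygy A n L M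

/-- Depth of a module over a Noetherian local ring:
`inf { i | Ext^i(k, N) ≠ 0 }`, as an extended natural number. -/
noncomputable def rdepth (A : Type) [CommRing A] [IsLocalRing A]
    (N : Type) [AddCommGroup N] [Module A N] : ℕ∞ :=
  sInf ((fun i : ℕ => (i : ℕ∞)) ''
    {i : ℕ | ¬ ExtVanishes A i (IsLocalRing.ResidueField A) N})

/-- `N` has finite injective dimension over `A`: it admits a finite injective coresolution. -/
noncomputable def HasFiniteInjDim (A : Type) [CommRing A]
    (N : Type) [AddCommGroup N] [Module A N] : Prop :=
  ∃ (m : ℕ) (D : ℕ → ModuleCat.{0} A) (δ : ∀ i : ℕ, (D i) →ₗ[A] (D (i + 1)))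
    (η : N →ₗ[A] (D 0)),
    (∀ i : ℕ, i ≤ m → Module.Injective A (D i)) ∧
    (∀ i : ℕ, m < i → Subsingleton (D i)) ∧
    Function.Injective η ∧ Function.Exact η (δ 0) ∧
    (∀ i : ℕ, Function.Exact (δ i) (δ (i + 1)))

/-- `N` has finite projective dimension over `A`: it admits a finite projective resolution. -/
noncomputable def HasFiniteProjDim (A : Type) [CommRing A]
    (N : Type) [AddCommGroup N] [Module A N] : Prop :=
  ∃ (m : ℕ) (D : ℕ → ModuleCat.{0} A) (d : ∀ i : ℕ, (D (i + 1)) →ₗ[A] (D i))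
    (ε : (D 0) →ₗ[A] N),
    (∀ i : ℕ, i ≤ m → Module.Projective A (D i)) ∧
    (∀ i : ℕ, m < i → Subsingleton (D i)) ∧
    Function.Surjective ε ∧ Function.Exact (d 0) ε ∧
    (∀ i : ℕ, Function.Exact (d (i + 1)) (d i))

/-- A regular local ring: a Noetherian local ring whose maximal ideal can be generated by
(Krull dimension)-many elements. -/
def IsRegularLocal (A : Type) [CommRing A] [IsLocalRing A] : Prop :=
  IsNoetherianRing A ∧ ∃ s : Finset A,
    Ideal.span (s : Set A) = IsLocalRing.maximalIdeal A ∧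
    (s.card : WithBot ℕ∞) = ringKrullDim A

/-- `M` admits an `n`-`C`-spherical approximation: a short exact sequence `0 → Y → X → M → 0`
with `X` finitely generated `n`-`C`-spherical and `Cdim Y < n`. -/
noncomputable def HasSphericalApprox (A : Type) [CommRing A]
    (C : Type) [AddCommGroup C] [Module A C]
    (M : Type) [AddCommGroup M] [Module A M] (n : ℕ) : Prop :=
  ∃ (X Y : ModuleCat.{0} A) (ι : ↥Y →ₗ[A] ↥X) (f : ↥X →ₗ[A] M),
    Module.Finite A ↥X ∧ Module.Finite A ↥Y ∧
    Function.Injective ι ∧ Function.Exact ι f ∧ Function.Surjective f ∧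
    IsCSpherical A C ↥X n ∧ cdim A C ↥Y < (n : ℕ∞)

section Auxiliary

def ExtendsAlong (R : Type) [CommRing R] (C : Type) [AddCommGroup C] [Module R C]
    {P N : Type} [AddCommGroup P] [Module R P] [AddCommGroup N] [Module R N]
    (ε : P →ₗ[R] N) : Prop :=
  ∀ φ : ↥(LinearMap.ker ε) →ₗ[R] C, ∃ ψ : P →ₗ[R] C,
    ψ.comp (LinearMap.ker ε).subtype = φ

variable {R : Type} [CommRing R]

lemma ExtendsAlong.transfer' {P₁ P₂ N C : Type}
    [AddCommGroup C] [Module R C]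
    [AddCommGroup P₁] [Module R P₁] [AddCommGroup P₂] [Module R P₂]
    [AddCommGroup N] [Module R N]
    [Module.Projective R P₁] [Module.Projective R P₂]
    {ε₁ : P₁ →ₗ[R] N} {ε₂ : P₂ →ₗ[R] N}
    (h₁ : Function.Surjective ε₁) (h₂ : Function.Surjective ε₂)
    (H : ExtendsAlong R C ε₁) : ExtendsAlong R C ε₂ := by
  obtain ⟨α, hα⟩ := Module.projective_lifting_property ε₁ ε₂ h₁
  obtain ⟨α', hα'⟩ := Module.projective_lifting_property ε₂ ε₁ h₂
  have hβmem : ∀ x ∈ LinearMap.ker ε₂, α x ∈ LinearMap.ker ε₁ := by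
    intro x hx
    simp only [LinearMap.mem_ker] at hx ⊢
    rw [← LinearMap.comp_apply, hα, hx]
  have hβ'mem : ∀ x ∈ LinearMap.ker ε₁, α' x ∈ LinearMap.ker ε₂ := by
    intro x hx
    simp only [LinearMap.mem_ker] at hx ⊢
    rw [← LinearMap.comp_apply, hα', hx]
  set β := α.restrict hβmem with hβ
  set β' := α'.restrict hβ'mem with hβ'
  set δ : P₂ →ₗ[R] P₂ := α'.comp α - LinearMap.id with hδ
  have hγmem : ∀ x : P₂, δ x ∈ LinearMap.ker ε₂ := by
    intro x
    simp only [hδ, LinearMap.mem_ker, LinearMap.sub_apply, LinearMap.comp_apply,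
      LinearMap.id_apply, map_sub]
    rw [← LinearMap.comp_apply ε₂ α', hα', ← LinearMap.comp_apply ε₁ α, hα, sub_self]
  set γ := δ.codRestrict _ hγmem with hγdef
  intro φ
  obtain ⟨ψ, hψ⟩ := H (φ.comp β')
  refine ⟨ψ.comp α - φ.comp γ, ?_⟩
  ext k
  have h1 : ψ (α k.1) = φ (β' (β k)) := by
    have : α k.1 = (LinearMap.ker ε₁).subtype (β k) := rfl
    rw [this, ← LinearMap.comp_apply, hψ, LinearMap.comp_apply]
  have h2 : γ k.1 = β' (β k) - k := by
    apply Subtype.ext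
    simp only [hγdef, hδ, LinearMap.codRestrict_apply, LinearMap.sub_apply, LinearMap.comp_apply,
      LinearMap.id_apply, AddSubgroupClass.coe_sub]
    rfl
  simp only [LinearMap.comp_apply, LinearMap.sub_apply, Submodule.coe_subtype, h1, h2, map_sub]
  abel


lemma ExtendsAlong.of_pi_ker {C : Type} [AddCommGroup C] [Module R C]
    {P N N' : Type} [AddCommGroup P] [Module R P]
    [AddCommGroup N] [Module R N] [AddCommGroup N'] [Module R N']
    {ε : P →ₗ[R] N} (H : ExtendsAlong R C ε) {n : ℕ}
    (E : (Fin n → P) →ₗ[R] N')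
    (hmem : ∀ x : Fin n → P, x ∈ LinearMap.ker E ↔ ∀ i, x i ∈ LinearMap.ker ε) :
    ExtendsAlong R C E := by
  intro φ
  have hsingle : ∀ (i : Fin n) (v : ↥(LinearMap.ker ε)),
      (Pi.single i v.1 : Fin n → P) ∈ LinearMap.ker E := by
    intro i v
    rw [hmem]
    intro j
    by_cases h : j = i
    · subst h; simp [v.2]
    · simp [Pi.single_eq_of_ne h]
  set e : ∀ i : Fin n, ↥(LinearMap.ker ε) →ₗ[R] ↥(LinearMap.ker E) := fun i =>
    ((LinearMap.single R (fun _ : Fin n => P) i).comp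
      (LinearMap.ker ε).subtype).codRestrict _ (fun v => hsingle i v) with he
  choose ψ hψ using fun i : Fin n => H (φ.comp (e i))
  refine ⟨∑ i : Fin n, (ψ i).comp (LinearMap.proj i), ?_⟩
  ext k
  have hk : ∀ i, k.1 i ∈ LinearMap.ker ε := (hmem k.1).1 k.2
  have h1 : ∀ i : Fin n, ψ i (k.1 i) = φ (e i ⟨k.1 i, hk i⟩) := by
    intro i
    exact LinearMap.congr_fun (hψ i) ⟨k.1 i, hk i⟩
  have h2 : (∑ i : Fin n, e i ⟨k.1 i, hk i⟩) = k := by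
    apply Subtype.ext
    push_cast
    simp only [he, LinearMap.codRestrict_apply, LinearMap.comp_apply, Submodule.coe_subtype,
      LinearMap.single_apply]
    exact Finset.univ_sum_single k.1
  have hcalc : (∑ i : Fin n, (ψ i).comp (LinearMap.proj i)) ((LinearMap.ker E).subtype k) = φ k :=
    calc (∑ i : Fin n, (ψ i).comp (LinearMap.proj i)) ((LinearMap.ker E).subtype k)
      = ∑ i : Fin n, ψ i (k.1 i) := by
          simp [LinearMap.sum_apply]
      _ = ∑ i : Fin n, φ (e i ⟨k.1 i, hk i⟩) := by simp [h1]
      _ = φ k := by rw [← map_sum, h2]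
  exact hcalc

lemma exists_factor_of_surjective {R A B D : Type} [CommRing R]
    [AddCommGroup A] [Module R A] [AddCommGroup B] [Module R B]
    [AddCommGroup D] [Module R D]
    (ρ : A →ₗ[R] B) (hρs : Function.Surjective ρ) (δ : A →ₗ[R] D)
    (h : LinearMap.ker ρ ≤ LinearMap.ker δ) :
    ∃ χ : B →ₗ[R] D, ∀ x, χ (ρ x) = δ x := by
  refine ⟨((LinearMap.ker ρ).liftQ δ h).comp
    (ρ.quotKerEquivOfSurjective hρs).symm.toLinearMap, ?_⟩
  intro x
  have h5 : (ρ.quotKerEquivOfSurjective hρs).symm (ρ x) = Submodule.Quotient.mk x := by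
    rw [LinearEquiv.symm_apply_eq]
    show ρ x = (ρ.quotKerEquivOfSurjective hρs) (Submodule.Quotient.mk x)
    simp [LinearMap.quotKerEquivOfSurjective, LinearEquiv.trans_apply]
  show ((LinearMap.ker ρ).liftQ δ h) ((ρ.quotKerEquivOfSurjective hρs).symm (ρ x)) = δ x
  rw [h5, Submodule.liftQ_apply]

lemma ExtendsAlong.comp_mkQ {R C P V M : Type} [CommRing R]
    [AddCommGroup C] [Module R C] [AddCommGroup P] [Module R P]
    [AddCommGroup V] [Module R V] [AddCommGroup M] [Module R M]
    (f : M →ₗ[R] V) (hf : Function.Injective f)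
    (hsurr : ∀ χ : M →ₗ[R] C, ∃ θ : V →ₗ[R] C, θ.comp f = χ)
    (p : P →ₗ[R] V) (hps : Function.Surjective p)
    (Hp : ExtendsAlong R C p) :
    ExtendsAlong R C ((LinearMap.range f).mkQ.comp p) := by
  set Λ := LinearMap.range f with hΛ
  set q : P →ₗ[R] (V ⧸ Λ) := Λ.mkQ.comp p with hqdef
  intro φq
  have hle : LinearMap.ker p ≤ LinearMap.ker q := by
    intro x hx
    simp only [LinearMap.mem_ker] at hx ⊢
    rw [hqdef, LinearMap.comp_apply, hx, map_zero]
  obtain ⟨ψ, hψ⟩ := Hp (φq.comp (Submodule.inclusion hle))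
  set δ : ↥(LinearMap.ker q) →ₗ[R] C := φq - ψ.comp (LinearMap.ker q).subtype with hδ
  have hmem2 : ∀ x : ↥(LinearMap.ker q), p x.1 ∈ Λ := by
    intro x
    have hx := x.2
    simp only [LinearMap.mem_ker, hqdef, LinearMap.comp_apply, Submodule.mkQ_apply] at hx
    exact (Submodule.Quotient.mk_eq_zero Λ).1 hx
  set ρ : ↥(LinearMap.ker q) →ₗ[R] M :=
    ((LinearEquiv.ofInjective f hf).symm.toLinearMap).comp
      ((p.comp (LinearMap.ker q).subtype).codRestrict Λ hmem2) with hρ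
  have hfρ : ∀ x : ↥(LinearMap.ker q), f (ρ x) = p x.1 := by
    intro x
    exact LinearEquiv.ofInjective_symm_apply (h := hf) f
      (((p.comp (LinearMap.ker q).subtype).codRestrict Λ hmem2) x)
  have hρs : Function.Surjective ρ := by
    intro m
    obtain ⟨y, hy⟩ := hps (f m)
    have hyk : y ∈ LinearMap.ker q := by
      simp only [LinearMap.mem_ker, hqdef, LinearMap.comp_apply, hy, Submodule.mkQ_apply]
      exact (Submodule.Quotient.mk_eq_zero Λ).2 ⟨m, rfl⟩
    refine ⟨⟨y, hyk⟩, hf ?_⟩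
    rw [hfρ]
    exact hy
  have hkerr : LinearMap.ker ρ ≤ LinearMap.ker δ := by
    intro x hx
    have h0 : p x.1 = 0 := by
      rw [← hfρ x, LinearMap.mem_ker.1 hx, map_zero]
    have hxk : x.1 ∈ LinearMap.ker p := h0
    have h1 : ψ x.1 = φq (Submodule.inclusion hle ⟨x.1, hxk⟩) :=
      LinearMap.congr_fun hψ ⟨x.1, hxk⟩
    have h2 : Submodule.inclusion hle ⟨x.1, hxk⟩ = x := Subtype.ext rfl
    simp only [LinearMap.mem_ker, hδ, LinearMap.sub_apply, LinearMap.comp_apply,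
      Submodule.coe_subtype]
    rw [h1, h2, sub_self]
  obtain ⟨χ₀, hχ₀r⟩ := exists_factor_of_surjective ρ hρs δ hkerr
  obtain ⟨θ, hθ⟩ := hsurr χ₀
  refine ⟨ψ + θ.comp p, ?_⟩
  apply LinearMap.ext
  intro x
  have h6 : θ (p x.1) = χ₀ (ρ x) := by
    rw [← hfρ x]
    exact LinearMap.congr_fun hθ (ρ x)
  show ψ x.1 + θ (p x.1) = φq x
  rw [h6, hχ₀r x, hδ]
  simp only [LinearMap.sub_apply, LinearMap.comp_apply, Submodule.coe_subtype]
  abel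

lemma extVanishes_iff_lifting (N C : Type) [AddCommGroup N] [Module R N]
    [AddCommGroup C] [Module R C] :
    ExtVanishes R 1 N C ↔
      ExtendsAlong R C
        ((ProjectiveResolution.of (ModuleCat.of R N)).π.f 0).hom := by
  set NN := ModuleCat.of R N with hNN
  set CC := ModuleCat.of R C with hCC
  set Q : ProjectiveResolution NN := ProjectiveResolution.of NN with hQ
  set K := Q.complex.linearYonedaObj R CC with hK
  set ε₀ : ↥(Q.complex.X 0) →ₗ[R] N := (Q.π.f 0).hom with hε₀
  -- step 1
  have eqv : (((Ext R (ModuleCat.{0} R) 1).obj (Opposite.op NN)).obj CC) ≃ ↥(K.homology 1) :=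
    (Q.isoExt 1 CC).toLinearEquiv.toEquiv
  have step1 : ExtVanishes R 1 N C ↔ Subsingleton ↥(K.homology 1) := eqv.subsingleton_congr
  -- step 2
  have step2 : Subsingleton ↥(K.homology 1) ↔ K.ExactAt 1 := by
    rw [HomologicalComplex.exactAt_iff_isZero_homology]
    constructor
    · intro h; exact ModuleCat.isZero_of_subsingleton _
    · intro h
      have hid : 𝟙 (K.homology 1) = 0 := h.eq_of_src _ _
      have key : ∀ a : ↥(K.homology 1), a = 0 := fun a => by
        have h2 : (𝟙 (K.homology 1)) a = (0 : K.homology 1 ⟶ K.homology 1) a := by rw [hid]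
        simpa using h2
      exact ⟨fun a b => by rw [key a, key b]⟩
  -- step 3 : exactness as concrete statement
  have step3 : K.ExactAt 1 ↔
      ∀ φ : Q.complex.X 1 ⟶ CC, Q.complex.d 2 1 ≫ φ = 0 →
        ∃ ψ : Q.complex.X 0 ⟶ CC, Q.complex.d 1 0 ≫ ψ = φ := by
    rw [HomologicalComplex.exactAt_iff' K 0 1 2 (by simp) (by simp)]
    rw [ShortComplex.moduleCat_exact_iff]
    have hd01 : ∀ (ψ : Q.complex.X 0 ⟶ CC), (K.d 0 1) ψ = Q.complex.d 1 0 ≫ ψ := fun ψ => rfl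
    have hd12 : ∀ (φ : Q.complex.X 1 ⟶ CC), (K.d 1 2) φ = Q.complex.d 2 1 ≫ φ := fun φ => rfl
    constructor
    · intro h φ hφ
      obtain ⟨ψ, hψ⟩ := h φ (by show (K.d 1 2) φ = 0; rw [hd12]; exact hφ)
      refine ⟨ψ, ?_⟩
      have : (K.d 0 1) ψ = φ := hψ
      have := (hd01 ψ).symm.trans this
      exact this
    · intro h φ hφ
      have hφ' : Q.complex.d 2 1 ≫ φ = 0 := by exact (hd12 φ).symm.trans hφ
      obtain ⟨ψ, hψ⟩ := h φ hφ'
      refine ⟨ψ, ?_⟩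
      show (K.d 0 1) ψ = φ
      rw [hd01]
      exact hψ
  -- module-level exactness facts
  set d10 : ↥(Q.complex.X 1) →ₗ[R] ↥(Q.complex.X 0) := (Q.complex.d 1 0).hom with hd10def
  set d21 : ↥(Q.complex.X 2) →ₗ[R] ↥(Q.complex.X 1) := (Q.complex.d 2 1).hom with hd21def
  have hsur : Function.Surjective ε₀ := by
    have h : Epi (Q.π.f 0) := inferInstance
    rw [ModuleCat.epi_iff_surjective] at h
    exact h
  have hker0 : LinearMap.ker ε₀ = LinearMap.range d10 := by
    ext x
    constructor
    · intro hx
      have hE := Q.exact₀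
      rw [ShortComplex.moduleCat_exact_iff] at hE
      exact hE x hx
    · rintro ⟨y, rfl⟩
      exact CategoryTheory.ConcreteCategory.congr_hom Q.complex_d_comp_π_f_zero y
  have hker1 : LinearMap.ker d10 = LinearMap.range d21 := by
    ext x
    constructor
    · intro hx
      have hE := Q.complex_exactAt_succ 0
      rw [HomologicalComplex.exactAt_iff' Q.complex 2 1 0 (by simp) (by simp)] at hE
      rw [ShortComplex.moduleCat_exact_iff] at hE
      exact hE x hx
    · rintro ⟨y, rfl⟩
      exact CategoryTheory.ConcreteCategory.congr_hom (Q.complex.d_comp_d 2 1 0) y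
  rw [step1, step2, step3]
  constructor
  · -- exactness statement → ExtendsAlong
    intro h φ'
    have hcod : ∀ x : ↥(Q.complex.X 1), d10 x ∈ LinearMap.ker ε₀ := by
      intro x; rw [hker0]; exact LinearMap.mem_range_self _ x
    set D10c : ↥(Q.complex.X 1) →ₗ[R] ↥(LinearMap.ker ε₀) := d10.codRestrict _ hcod with hD
    set φ : Q.complex.X 1 ⟶ CC := ModuleCat.ofHom (φ'.comp D10c : ↥(Q.complex.X 1) →ₗ[R] C) with hφdef
    have hφ : Q.complex.d 2 1 ≫ φ = 0 := by
      apply ModuleCat.hom_ext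
      apply LinearMap.ext
      intro x
      have h0 : d10 (d21 x) = 0 := CategoryTheory.ConcreteCategory.congr_hom (Q.complex.d_comp_d 2 1 0) x
      have h1 : D10c (d21 x) = 0 := Subtype.ext h0
      show φ (d21 x) = 0
      rw [hφdef]
      show φ' (D10c (d21 x)) = 0
      rw [h1]; exact map_zero φ'
    obtain ⟨ψ, hψ⟩ := h φ hφ
    refine ⟨ψ.hom, ?_⟩
    apply LinearMap.ext
    rintro ⟨v, hv⟩
    obtain ⟨x, hx⟩ : v ∈ LinearMap.range d10 := hker0 ▸ hv
    have h2 : ψ (d10 x) = φ x := CategoryTheory.ConcreteCategory.congr_hom hψ x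
    have h3 : φ x = φ' ⟨v, hv⟩ := by
      rw [hφdef]
      show φ' (D10c x) = φ' ⟨v, hv⟩
      congr 1
      exact Subtype.ext hx
    subst hx
    exact h2.trans h3
  · -- ExtendsAlong → exactness statement
    intro H φ hφ
    have hkill : LinearMap.ker d10 ≤ LinearMap.ker φ.hom := by
      intro x hx
      rw [hker1] at hx
      obtain ⟨y, rfl⟩ := hx
      exact CategoryTheory.ConcreteCategory.congr_hom hφ y
    set φ' : ↥(LinearMap.ker ε₀) →ₗ[R] C :=
      ((LinearMap.ker d10).liftQ φ.hom hkill).comp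
        (((d10.quotKerEquivRange).symm.toLinearMap).comp
          (LinearEquiv.ofEq _ _ hker0).toLinearMap) with hφ'def
    obtain ⟨ψ, hψ⟩ := H φ'
    refine ⟨ModuleCat.ofHom ψ, ?_⟩
    apply ModuleCat.hom_ext
    apply LinearMap.ext
    intro x
    have hmem : d10 x ∈ LinearMap.ker ε₀ := by
      rw [hker0]; exact LinearMap.mem_range_self _ x
    have h2 : ψ (d10 x) = φ' ⟨d10 x, hmem⟩ := LinearMap.congr_fun hψ ⟨d10 x, hmem⟩
    have h3 : φ' ⟨d10 x, hmem⟩ = φ x := by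
      rw [hφ'def]
      have h4 : (LinearEquiv.ofEq _ _ hker0) ⟨d10 x, hmem⟩
          = ⟨d10 x, LinearMap.mem_range_self _ x⟩ := rfl
      have h5 : (d10.quotKerEquivRange).symm ⟨d10 x, LinearMap.mem_range_self _ x⟩
          = Submodule.Quotient.mk x := by
        rw [LinearEquiv.symm_apply_eq]
        apply Subtype.ext
        simp
      show ((LinearMap.ker d10).liftQ φ.hom hkill)
          ((d10.quotKerEquivRange).symm ((LinearEquiv.ofEq _ _ hker0) ⟨d10 x, hmem⟩)) = φ x
      rw [h4, h5, Submodule.liftQ_apply]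
    show ψ (d10 x) = φ x
    rw [h2, h3]

lemma extVanishes_iff_extendsAlong (N C P : Type) [AddCommGroup N] [Module R N]
    [AddCommGroup C] [Module R C] [AddCommGroup P] [Module R P] [Module.Projective R P]
    (ε : P →ₗ[R] N) (hε : Function.Surjective ε) :
    ExtVanishes R 1 N C ↔ ExtendsAlong R C ε := by
  rw [extVanishes_iff_lifting N C]
  have hproj : Module.Projective R
      ↥((ProjectiveResolution.of (ModuleCat.of R N)).complex.X 0) := by
    rw [IsProjective.iff_projective]
    show Projective ((ProjectiveResolution.of (ModuleCat.of R N)).complex.X 0)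
    infer_instance
  have hsur0 : Function.Surjective
      ((ProjectiveResolution.of (ModuleCat.of R N)).π.f 0).hom := by
    have h : Epi ((ProjectiveResolution.of (ModuleCat.of R N)).π.f 0) := inferInstance
    rw [ModuleCat.epi_iff_surjective] at h
    exact h
  exact ⟨fun H => H.transfer' hsur0 hε, fun H => H.transfer' hε hsur0⟩

end Auxiliary

/-- Suppose `Ext^1_R(C,C) = 0`. Then a finitely generated module `M` is `1`-`C`-torsionfree
iff there is a short exact sequence `0 → M → C₀ → N → 0` with `C₀ ∈ add C` and
`Ext^1_R(N,C) = 0`. -/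


theorem statement5 (R : Type) [CommRing R] [IsNoetherianRing R]
    (C : Type) [AddCommGroup C] [Module R C] [Module.Finite R C]
    (hC : ExtVanishes R 1 C C)
    (M : Type) [AddCommGroup M] [Module R M] [Module.Finite R M] :
    IsCTorsionfree R C M 1 ↔
      ∃ (C₀ N : ModuleCat.{0} R) (f : M →ₗ[R] ↥C₀) (g : ↥C₀ →ₗ[R] ↥N),
        Module.Finite R ↥N ∧ MemAddC R C ↥C₀ ∧
        Function.Injective f ∧ Function.Exact f g ∧ Function.Surjective g ∧
        ExtVanishes R 1 ↥N C := by
  constructor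
  · intro hM
    have hM1 : Function.Injective (evalMap R C M) := hM
    -- `Hom(M,C)` is a Noetherian module
    obtain ⟨a, π, hπ⟩ := Module.Finite.exists_fin' R M
    haveI : IsNoetherian R (M →ₗ[R] C) := by
      refine isNoetherian_of_injective (LinearMap.lcomp R C π) ?_
      intro g₁ g₂ h
      apply LinearMap.ext
      intro m
      obtain ⟨x, rfl⟩ := hπ m
      exact LinearMap.congr_fun h x
    obtain ⟨n, φ, hφ⟩ := Module.Finite.exists_fin (R := R) (M := (M →ₗ[R] C))
    set f : M →ₗ[R] (Fin n → C) := LinearMap.pi φ with hfdef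
    have hgen : ∀ g : M →ₗ[R] C, ∃ c : Fin n → R, (∑ i, c i • φ i) = g := by
      intro g
      have hg : g ∈ Submodule.span R (Set.range φ) := hφ ▸ Submodule.mem_top
      exact (Submodule.mem_span_range_iff_exists_fun R).1 hg
    have hf : Function.Injective f := by
      rw [injective_iff_map_eq_zero]
      intro x hx
      have hx' : ∀ i, φ i x = 0 := fun i => congrFun hx i
      have hall : ∀ g : M →ₗ[R] C, g x = 0 := by
        intro g
        obtain ⟨c, hc⟩ := hgen g
        calc g x = (∑ i, c i • φ i) x := by rw [hc]
          _ = ∑ i, c i • (φ i x) := by simp [LinearMap.sum_apply]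
          _ = 0 := by simp [hx']
      have hev : evalMap R C M x = evalMap R C M 0 := by
        apply LinearMap.ext
        intro g
        simpa [evalMap] using hall g
      simpa using hM1 hev
    have hsurr : ∀ χ : M →ₗ[R] C, ∃ θ : (Fin n → C) →ₗ[R] C, θ.comp f = χ := by
      intro χ
      obtain ⟨c, hc⟩ := hgen χ
      refine ⟨∑ i, c i • LinearMap.proj i, ?_⟩
      apply LinearMap.ext
      intro x
      calc (∑ i, c i • (LinearMap.proj i : (Fin n → C) →ₗ[R] C)) (f x)
          = ∑ i, c i • (φ i x) := by simp [LinearMap.sum_apply, hfdef]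
        _ = (∑ i, c i • φ i) x := by simp [LinearMap.sum_apply]
        _ = χ x := by rw [hc]
    set Λ := LinearMap.range f with hΛ
    set N₀ := (Fin n → C) ⧸ Λ with hN₀
    set g : (Fin n → C) →ₗ[R] N₀ := Λ.mkQ with hg
    set p1 : (C →₀ R) →ₗ[R] C := Finsupp.linearCombination R (id : C → C) with hp1
    have hp1s : Function.Surjective p1 :=
      Finsupp.linearCombination_surjective R Function.surjective_id
    set pbig : (Fin n → (C →₀ R)) →ₗ[R] (Fin n → C) :=
      LinearMap.pi (fun i => p1.comp (LinearMap.proj i)) with hpbigdef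
    have hpbigs : Function.Surjective pbig := by
      intro y
      choose z hz using fun i => hp1s (y i)
      exact ⟨fun i => z i, funext fun i => hz i⟩
    set q : (Fin n → (C →₀ R)) →ₗ[R] N₀ := g.comp pbig with hqdef
    have hqs : Function.Surjective q := (Submodule.mkQ_surjective Λ).comp hpbigs
    have HC : ExtendsAlong R C p1 := (extVanishes_iff_extendsAlong C C _ p1 hp1s).1 hC
    have Hpbig : ExtendsAlong R C pbig := HC.of_pi_ker pbig (by
      intro x
      simp [hpbigdef, LinearMap.mem_ker, funext_iff])
    have Hq : ExtendsAlong R C q :=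
      ExtendsAlong.comp_mkQ f hf hsurr pbig hpbigs Hpbig
    have hExtN : ExtVanishes R 1 N₀ C :=
      (extVanishes_iff_extendsAlong N₀ C _ q hqs).2 Hq
    refine ⟨ModuleCat.of R (Fin n → C), ModuleCat.of R N₀, f, g, ?_, ?_, hf, ?_,
      Submodule.mkQ_surjective Λ, hExtN⟩
    · exact Module.Finite.of_surjective g (Submodule.mkQ_surjective Λ)
    · exact ⟨n, LinearMap.id, LinearMap.id, by simp⟩
    · refine LinearMap.exact_iff.2 ?_
      rw [hg, Submodule.ker_mkQ, hΛ]
  · rintro ⟨C₀, N, f, g, hNfin, ⟨k, u, v, huv⟩, hfinj, hexact, hgsurj, hext⟩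
    show Function.Injective (evalMap R C M)
    rw [injective_iff_map_eq_zero]
    intro x hx
    have hall : ∀ gm : M →ₗ[R] C, gm x = 0 := by
      intro gm
      simpa [evalMap] using LinearMap.congr_fun hx gm
    have hu : u (f x) = 0 := by
      funext i
      exact hall ((LinearMap.proj i).comp (u.comp f))
    have hfx : f x = 0 := by
      have h2 : v (u (f x)) = f x := LinearMap.congr_fun huv (f x)
      rw [← h2, hu, map_zero]
    have h3 : f x = f 0 := by simpa using hfx
    simpa using hfinj h3
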